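/- Let (λ_n)_{n∈ℕ} be a sequence of nonzero real numbers satisfying a Weyl-type counting bound of order m. Then for every complex number z with Re z > m/2, the function t ↦ Σ_n (sgn(λ_n)/2)·erfc(|λ_n|·√t) is integrable against t^{z−1} dt on (0,∞), and ∫₀^∞ (Σ_n (sgn(λ_n)/2)·erfc(|λ_n|·√t))·t^{z−1} dt = (Γ(z+1/2)/(2z·√π))·Σ_n sgn(λ_n)·|λ_n|^{−2z}. -/

import Mathlib

open MeasureTheory Real Set

/-- A sequence `(λ_n)` of real numbers satisfies a Weyl-type counting bound of order `m`
if there is a constant `C > 0` such that for every `T ≥ 0` the set `{n : |λ_n| ≤ T}` is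
finite with cardinality at most `C·(1+T)^m`. -/
def WeylBound (lam : ℕ → ℝ) (m : ℕ) : Prop :=
  ∃ C > (0 : ℝ), ∀ T : ℝ, 0 ≤ T →
    {n : ℕ | |lam n| ≤ T}.Finite ∧ ({n : ℕ | |lam n| ≤ T}.ncard : ℝ) ≤ C * (1 + T) ^ m

/-- The complementary error function `erfc(x) = (2/√π) ∫_x^∞ exp(−ξ²) dξ`. -/
noncomputable def erfc (x : ℝ) : ℝ :=
  (2 / Real.sqrt π) * ∫ ξ in Ioi x, Real.exp (-ξ ^ 2)


open Filter Topology
open scoped ENNReal NNReal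



lemma integrable_gauss : Integrable (fun ξ : ℝ => Real.exp (-ξ ^ 2)) := by
  simpa using integrable_exp_neg_mul_sq (b := 1) one_pos

lemma integrable_gauss_half : Integrable (fun ξ : ℝ => Real.exp (-(ξ ^ 2 / 2))) := by
  have := integrable_exp_neg_mul_sq (b := 1/2) (by norm_num)
  refine this.congr ?_
  filter_upwards with x
  ring_nf

noncomputable def gInt (x : ℝ) : ℝ := ∫ ξ in Ioi x, Real.exp (-ξ ^ 2)

lemma gInt_nonneg (x : ℝ) : 0 ≤ gInt x :=
  setIntegral_nonneg measurableSet_Ioi fun _ _ => (Real.exp_pos _).le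

lemma gInt_antitone : Antitone gInt := by
  intro x y hxy
  exact setIntegral_mono_set integrable_gauss.integrableOn
    (Eventually.of_forall fun _ => (Real.exp_pos _).le)
    (HasSubset.Subset.eventuallyLE (Ioi_subset_Ioi hxy))

lemma gInt_le_exp {x : ℝ} (hx : 0 ≤ x) : gInt x ≤ Real.sqrt (2 * π) * Real.exp (-(x ^ 2 / 2)) := by
  have h1 : gInt x ≤ ∫ ξ in Ioi x, Real.exp (-(x ^ 2 / 2)) * Real.exp (-(ξ ^ 2 / 2)) := by
    refine setIntegral_mono_on integrable_gauss.integrableOn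
      ((integrable_gauss_half.const_mul _).integrableOn) measurableSet_Ioi ?_
    intro ξ hξ
    rw [← Real.exp_add]
    apply Real.exp_le_exp.2
    have hξx : x ≤ ξ := le_of_lt hξ
    nlinarith [sq_nonneg (ξ - x)]
  have h2 : ∫ ξ in Ioi x, Real.exp (-(x ^ 2 / 2)) * Real.exp (-(ξ ^ 2 / 2))
      = Real.exp (-(x ^ 2 / 2)) * ∫ ξ in Ioi x, Real.exp (-(ξ ^ 2 / 2)) := by
    rw [integral_const_mul]
  have h3 : ∫ ξ in Ioi x, Real.exp (-(ξ ^ 2 / 2)) ≤ ∫ ξ : ℝ, Real.exp (-(ξ ^ 2 / 2)) := by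
    refine setIntegral_le_integral integrable_gauss_half ?_
    filter_upwards with ξ using (Real.exp_pos _).le
  have h4 : ∫ ξ : ℝ, Real.exp (-(ξ ^ 2 / 2)) = Real.sqrt (2 * π) := by
    have := integral_gaussian (1/2)
    have h5 : (π / (1/2)) = 2 * π := by ring
    rw [h5] at this
    rw [← this]
    congr 1 with ξ
    ring_nf
  calc gInt x ≤ _ := h1
    _ = _ := h2
    _ ≤ Real.exp (-(x ^ 2 / 2)) * Real.sqrt (2 * π) := by
        refine mul_le_mul_of_nonneg_left ?_ (Real.exp_pos _).le
        exact h4 ▸ h3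
    _ = _ := mul_comm _ _

lemma gInt_eq (x : ℝ) : gInt x = gInt 0 - ∫ ξ in (0:ℝ)..x, Real.exp (-ξ ^ 2) := by
  rcases le_total 0 x with h | h
  · have hs : gInt 0 = (∫ ξ in Ioc 0 x, Real.exp (-ξ ^ 2)) + gInt x := by
      rw [show gInt 0 = ∫ ξ in Ioi 0, Real.exp (-ξ ^ 2) from rfl, ← Ioc_union_Ioi_eq_Ioi h,
        setIntegral_union (Set.Ioc_disjoint_Ioi le_rfl) measurableSet_Ioi
          integrable_gauss.integrableOn integrable_gauss.integrableOn]
      rfl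
    rw [intervalIntegral.integral_of_le h]
    rw [show (∫ ξ in Ioc 0 x, Real.exp (-ξ ^ 2) ∂volume) = ∫ ξ in Ioc 0 x, Real.exp (-ξ ^ 2) from rfl]
    linarith
  · have hs : gInt x = (∫ ξ in Ioc x 0, Real.exp (-ξ ^ 2)) + gInt 0 := by
      rw [show gInt x = ∫ ξ in Ioi x, Real.exp (-ξ ^ 2) from rfl, ← Ioc_union_Ioi_eq_Ioi h,
        setIntegral_union (Set.Ioc_disjoint_Ioi le_rfl) measurableSet_Ioi
          integrable_gauss.integrableOn integrable_gauss.integrableOn]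
      rfl
    rw [intervalIntegral.integral_of_ge h]
    rw [show (∫ ξ in Ioc x 0, Real.exp (-ξ ^ 2) ∂volume) = ∫ ξ in Ioc x 0, Real.exp (-ξ ^ 2) from rfl]
    linarith

lemma hasDerivAt_gInt (x : ℝ) : HasDerivAt gInt (-Real.exp (-x ^ 2)) x := by
  have hcont : Continuous fun ξ : ℝ => Real.exp (-ξ ^ 2) := by continuity
  have h : HasDerivAt (fun y => ∫ ξ in (0:ℝ)..y, Real.exp (-ξ ^ 2)) (Real.exp (-x ^ 2)) x :=
    intervalIntegral.integral_hasDerivAt_right integrable_gauss.intervalIntegrable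
      (hcont.stronglyMeasurable.stronglyMeasurableAtFilter)
      hcont.continuousAt
  have h2 := h.const_sub (gInt 0)
  exact h2.congr_of_eventuallyEq (by filter_upwards with y using gInt_eq y)

lemma sqrt_pi_pos : 0 < Real.sqrt π := Real.sqrt_pos.2 Real.pi_pos

lemma erfc_eq (x : ℝ) : erfc x = 2 / Real.sqrt π * gInt x := rfl

lemma erfc_nonneg (x : ℝ) : 0 ≤ erfc x :=
  mul_nonneg (by positivity) (gInt_nonneg x)

lemma erfc_le_exp {x : ℝ} (hx : 0 ≤ x) : erfc x ≤ 3 * Real.exp (-(x ^ 2 / 2)) := by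
  have h := gInt_le_exp hx
  have h2 : erfc x ≤ 2 / Real.sqrt π * (Real.sqrt (2 * π) * Real.exp (-(x ^ 2 / 2))) := by
    rw [erfc_eq]
    exact mul_le_mul_of_nonneg_left h (by positivity)
  refine h2.trans ?_
  have hs : Real.sqrt (2 * π) = Real.sqrt 2 * Real.sqrt π := Real.sqrt_mul (by norm_num) π
  have hkey : 2 / Real.sqrt π * Real.sqrt (2 * π) ≤ 3 := by
    rw [hs]
    have hπ : Real.sqrt π ≠ 0 := sqrt_pi_pos.ne'
    have h2' : (Real.sqrt 2) ^ 2 = 2 := Real.sq_sqrt (by norm_num)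
    have hnn : 0 ≤ Real.sqrt 2 := Real.sqrt_nonneg 2
    have : 2 / Real.sqrt π * (Real.sqrt 2 * Real.sqrt π) = 2 * Real.sqrt 2 := by
      field_simp
    rw [this]
    nlinarith
  calc 2 / Real.sqrt π * (Real.sqrt (2 * π) * Real.exp (-(x ^ 2 / 2)))
      = (2 / Real.sqrt π * Real.sqrt (2 * π)) * Real.exp (-(x ^ 2 / 2)) := by ring
    _ ≤ 3 * Real.exp (-(x ^ 2 / 2)) :=
        mul_le_mul_of_nonneg_right hkey (Real.exp_pos _).le

lemma hasDerivAt_erfc (x : ℝ) :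
    HasDerivAt erfc (-(2 / Real.sqrt π * Real.exp (-x ^ 2))) x := by
  have h := (hasDerivAt_gInt x).const_mul (2 / Real.sqrt π)
  have heq : erfc = fun y => 2 / Real.sqrt π * gInt y := rfl
  rw [heq]
  exact h.congr_deriv (by ring)

lemma continuous_erfc : Continuous erfc :=
  continuous_iff_continuousAt.2 fun x => (hasDerivAt_erfc x).continuousAt

lemma integrableOn_rpow_exp {s b : ℝ} (hs : -1 < s) (hb : 0 < b) :
    IntegrableOn (fun t : ℝ => t ^ s * Real.exp (-b * t)) (Ioi 0) volume := by
  simpa [Real.rpow_one] using integrableOn_rpow_mul_exp_neg_mul_rpow hs zero_lt_one hb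

lemma cpow_of_pos {x : ℝ} (hx : 0 < x) (w : ℂ) :
    (x : ℂ) ^ w = Complex.exp ((Real.log x : ℂ) * w) := by
  rw [Complex.cpow_def_of_ne_zero (Complex.ofReal_ne_zero.2 hx.ne'), Complex.ofReal_log hx.le]

lemma mellin_erfc {a : ℝ} (ha : 0 < a) {z : ℂ} (hz : 0 < z.re) :
    IntegrableOn (fun t : ℝ => ((erfc (a * Real.sqrt t) : ℝ) : ℂ) * (t : ℂ) ^ (z - 1))
      (Ioi 0) volume ∧
    ∫ t in Ioi (0:ℝ), ((erfc (a * Real.sqrt t) : ℝ) : ℂ) * (t : ℂ) ^ (z - 1)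
      = Complex.Gamma (z + 1/2) / (z * Real.sqrt π) * (a : ℂ) ^ (-(2 * z)) := by
  have hzne : z ≠ 0 := by
    intro h; rw [h] at hz; simp at hz
  have habs : (0:ℝ) < ‖z‖ := by
    simpa [norm_pos_iff] using hzne
  set u : ℝ → ℂ := fun t => ((erfc (a * Real.sqrt t) : ℝ) : ℂ) with hu_def
  set u' : ℝ → ℂ := fun t => ((-(a / Real.sqrt π) * Real.exp (-(a ^ 2 * t)) / Real.sqrt t : ℝ) : ℂ) with hu'_def
  set v : ℝ → ℂ := fun t => (t : ℂ) ^ z / z with hv_def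
  set v' : ℝ → ℂ := fun t => (t : ℂ) ^ (z - 1) with hv'_def
  -- derivative of u
  have hu : ∀ t ∈ Ioi (0:ℝ), HasDerivAt u (u' t) t := by
    intro t ht
    replace ht : 0 < t := ht
    have hst : 0 < Real.sqrt t := Real.sqrt_pos.2 ht
    have h1 : HasDerivAt (fun s : ℝ => a * Real.sqrt s) (a * (1 / (2 * Real.sqrt t))) t :=
      (Real.hasDerivAt_sqrt ht.ne').const_mul a
    have h2 := (hasDerivAt_erfc (a * Real.sqrt t)).comp t h1
    have h3 := h2.ofReal_comp
    have heq : (-(2 / Real.sqrt π * Real.exp (-(a * Real.sqrt t) ^ 2)) * (a * (1 / (2 * Real.sqrt t))))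
        = -(a / Real.sqrt π) * Real.exp (-(a ^ 2 * t)) / Real.sqrt t := by
      rw [mul_pow, Real.sq_sqrt ht.le]
      have hπ : Real.sqrt π ≠ 0 := sqrt_pi_pos.ne'
      field_simp
    rw [hu'_def]
    simp only []
    rw [← heq]
    exact h3
  -- derivative of v
  have hv : ∀ t ∈ Ioi (0:ℝ), HasDerivAt v (v' t) t := by
    intro t ht
    have hz1 : z - 1 ≠ -1 := by
      intro h
      apply hzne
      have := congrArg (· + 1) h
      simpa using this
    have := hasDerivAt_ofReal_cpow_const' (ne_of_gt (mem_Ioi.1 ht)) hz1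
    simpa [sub_add_cancel] using this
  -- integrability of u * v'
  have hrept : ∀ t : ℝ, (z - 1).re = z.re - 1 := fun _ => by simp
  have huv'_int : IntegrableOn (fun t => u t * v' t) (Ioi 0) volume := by
    refine Integrable.mono' ((integrableOn_rpow_exp (s := z.re - 1) (b := a ^ 2 / 2)
        (by linarith) (by positivity)).const_mul 3) ?_ ?_
    · apply AEStronglyMeasurable.mul
      · exact (Complex.continuous_ofReal.comp
          (continuous_erfc.comp (continuous_const.mul Real.continuous_sqrt))).aestronglyMeasurable
      · refine (ContinuousOn.aestronglyMeasurable ?_ measurableSet_Ioi)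
        intro t ht
        exact (Complex.continuousAt_ofReal_cpow_const t (z - 1)
          (Or.inr (ne_of_gt (mem_Ioi.1 ht)))).continuousWithinAt
    · filter_upwards [ae_restrict_mem measurableSet_Ioi] with t ht
      replace ht : 0 < t := ht
      rw [norm_mul, Complex.norm_real, Real.norm_eq_abs,
        Complex.norm_cpow_eq_rpow_re_of_pos ht, hrept t, abs_of_nonneg (erfc_nonneg _)]
      have hb := erfc_le_exp (mul_nonneg ha.le (Real.sqrt_nonneg t))
      have hsq : (a * Real.sqrt t) ^ 2 / 2 = a ^ 2 / 2 * t := by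
        rw [mul_pow, Real.sq_sqrt ht.le]; ring
      rw [hsq] at hb
      calc erfc (a * Real.sqrt t) * t ^ (z.re - 1)
          ≤ 3 * Real.exp (-(a ^ 2 / 2 * t)) * t ^ (z.re - 1) :=
            mul_le_mul_of_nonneg_right hb (Real.rpow_nonneg ht.le _)
        _ = 3 * (t ^ (z.re - 1) * Real.exp (-(a ^ 2 / 2) * t)) := by ring_nf
  -- integrability of u' * v
  have hu'v_int : IntegrableOn (fun t => u' t * v t) (Ioi 0) volume := by
    refine Integrable.mono' ((integrableOn_rpow_exp (s := z.re - 1/2) (b := a ^ 2)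
        (by linarith) (by positivity)).const_mul (a / Real.sqrt π / ‖z‖)) ?_ ?_
    · apply AEStronglyMeasurable.mul
      · refine (ContinuousOn.aestronglyMeasurable ?_ measurableSet_Ioi)
        apply Complex.continuous_ofReal.comp_continuousOn
        apply ContinuousOn.div
        · exact ((continuous_const.mul
            (Real.continuous_exp.comp (by continuity))).continuousOn)
        · exact Real.continuous_sqrt.continuousOn
        · intro t ht
          exact (Real.sqrt_pos.2 (mem_Ioi.1 ht)).ne'
      · refine (ContinuousOn.aestronglyMeasurable ?_ measurableSet_Ioi)
        apply ContinuousOn.div_const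
        intro t ht
        exact (Complex.continuousAt_ofReal_cpow_const t z
          (Or.inr (ne_of_gt (mem_Ioi.1 ht)))).continuousWithinAt
    · filter_upwards [ae_restrict_mem measurableSet_Ioi] with t ht
      replace ht : 0 < t := ht
      have hst : 0 < Real.sqrt t := Real.sqrt_pos.2 ht
      rw [norm_mul, Complex.norm_real, Real.norm_eq_abs,
        norm_div, Complex.norm_cpow_eq_rpow_re_of_pos ht]
      have h1 : |(-(a / Real.sqrt π) * Real.exp (-(a ^ 2 * t)) / Real.sqrt t)|
          = a / Real.sqrt π * Real.exp (-(a ^ 2 * t)) / Real.sqrt t := by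
        rw [abs_div, abs_mul, abs_neg, abs_of_nonneg (by positivity : (0:ℝ) ≤ a / Real.sqrt π),
          abs_of_nonneg (Real.exp_pos _).le, abs_of_nonneg hst.le]
      rw [h1]
      have hsqrt : Real.sqrt t = t ^ (1/2 : ℝ) := Real.sqrt_eq_rpow t
      have hrw : t ^ z.re / Real.sqrt t = t ^ (z.re - 1/2) := by
        rw [hsqrt, ← Real.rpow_sub ht]
      apply le_of_eq
      rw [show (-a ^ 2 * t) = -(a ^ 2 * t) by ring, ← hrw]
      field_simp
  -- boundary limits
  have h_zero : Tendsto (fun t => u t * v t) (𝓝[>] (0:ℝ)) (𝓝 0) := by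
    apply squeeze_zero_norm' (a := fun t => 3 / ‖z‖ * t ^ z.re)
    · filter_upwards [self_mem_nhdsWithin] with t ht
      replace ht : 0 < t := ht
      rw [norm_mul, Complex.norm_real, Real.norm_eq_abs,
        norm_div, Complex.norm_cpow_eq_rpow_re_of_pos ht, abs_of_nonneg (erfc_nonneg _)]
      have he1 : Real.exp (-((a * Real.sqrt t) ^ 2 / 2)) ≤ 1 := by
        rw [← Real.exp_zero]
        exact Real.exp_le_exp.2 (neg_nonpos.2 (by positivity))
      have hb : erfc (a * Real.sqrt t) ≤ 3 :=
        (erfc_le_exp (mul_nonneg ha.le (Real.sqrt_nonneg t))).trans (by linarith)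
      calc erfc (a * Real.sqrt t) * (t ^ z.re / ‖z‖)
          ≤ 3 * (t ^ z.re / ‖z‖) := by
            apply mul_le_mul_of_nonneg_right hb
            positivity
        _ = 3 / ‖z‖ * t ^ z.re := by ring
    · have h0 : Tendsto (fun t : ℝ => t ^ z.re) (𝓝[>] 0) (𝓝 0) := by
        have hc : ContinuousAt (fun t : ℝ => t ^ z.re) 0 :=
          Real.continuousAt_rpow_const 0 z.re (Or.inr hz.le)
        have h2 : Tendsto (fun t : ℝ => t ^ z.re) (𝓝[>] 0) (𝓝 ((0:ℝ) ^ z.re)) :=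
          hc.tendsto.mono_left (nhdsWithin_le_nhds (s := Set.Ioi 0))
        rwa [Real.zero_rpow hz.ne'] at h2
      have := h0.const_mul (3 / ‖z‖)
      simpa using this
  have h_infty : Tendsto (fun t => u t * v t) atTop (𝓝 0) := by
    apply squeeze_zero_norm' (a := fun t => 3 / ‖z‖ * (t ^ z.re * Real.exp (-(a ^ 2 / 2) * t)))
    · filter_upwards [eventually_gt_atTop 0] with t ht
      rw [norm_mul, Complex.norm_real, Real.norm_eq_abs,
        norm_div, Complex.norm_cpow_eq_rpow_re_of_pos ht, abs_of_nonneg (erfc_nonneg _)]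
      have hb := erfc_le_exp (mul_nonneg ha.le (Real.sqrt_nonneg t))
      have hsq : (a * Real.sqrt t) ^ 2 / 2 = a ^ 2 / 2 * t := by
        rw [mul_pow, Real.sq_sqrt ht.le]; ring
      rw [hsq] at hb
      calc erfc (a * Real.sqrt t) * (t ^ z.re / ‖z‖)
          ≤ 3 * Real.exp (-(a ^ 2 / 2 * t)) * (t ^ z.re / ‖z‖) := by
            apply mul_le_mul_of_nonneg_right hb
            positivity
        _ = 3 / ‖z‖ * (t ^ z.re * Real.exp (-(a ^ 2 / 2) * t)) := by ring_nf
    · have h0 := tendsto_rpow_mul_exp_neg_mul_atTop_nhds_zero z.re (a ^ 2 / 2) (by positivity)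
      have := h0.const_mul (3 / ‖z‖)
      simpa using this
  -- integration by parts
  have key : (∫ t in Ioi (0:ℝ), u t * v' t) = 0 - 0 - ∫ t in Ioi (0:ℝ), u' t * v t :=
    integral_Ioi_mul_deriv_eq_deriv_mul hu hv huv'_int hu'v_int h_zero h_infty
  -- the Gamma integral
  have hA : (0:ℝ) < (z + 1/2).re := by
    rw [Complex.add_re]
    have : ((1:ℂ)/2).re = 1/2 := by norm_num [Complex.div_re]
    rw [this]; linarith
  have hgam := Complex.integral_cpow_mul_exp_neg_mul_Ioi (a := z + 1/2) (r := a ^ 2) hA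
    (by positivity)
  have hI2 : ∫ t in Ioi (0:ℝ), u' t * v t
      = -(a / Real.sqrt π) / z *
        ∫ t in Ioi (0:ℝ), (t:ℂ) ^ (z + 1/2 - 1) * Complex.exp (-((a ^ 2 : ℝ) * (t:ℝ) : ℂ)) := by
    rw [← integral_const_mul]
    refine setIntegral_congr_fun measurableSet_Ioi (fun t ht => ?_)
    replace ht : 0 < t := ht
    have hst : 0 < Real.sqrt t := Real.sqrt_pos.2 ht
    have h2 : ((Real.sqrt t : ℝ) : ℂ) = (t:ℂ) ^ (1/2 : ℂ) := by
      rw [Real.sqrt_eq_rpow, Complex.ofReal_cpow ht.le]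
      norm_num
    have hcs : (t:ℂ) ^ (z + 1/2 - 1) = (t:ℂ) ^ z / (t:ℂ) ^ (1/2 : ℂ) := by
      rw [← Complex.cpow_sub _ _ (Complex.ofReal_ne_zero.2 ht.ne')]
      ring_nf
    have hne : (t:ℂ) ^ (1/2 : ℂ) ≠ 0 := by
      rw [Ne, Complex.cpow_eq_zero_iff]
      push_neg
      intro h
      exact absurd (Complex.ofReal_eq_zero.1 h) ht.ne'
    have hexp : ((Real.exp (-(a ^ 2 * t)) : ℝ) : ℂ) = Complex.exp (-((a ^ 2 : ℝ) * (t:ℝ) : ℂ)) := by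
      rw [Complex.ofReal_exp]
      norm_cast
    show ((-(a / Real.sqrt π) * Real.exp (-(a ^ 2 * t)) / Real.sqrt t : ℝ) : ℂ) * ((t:ℂ) ^ z / z)
        = _
    rw [hcs]
    push_cast [hexp, h2]
    field_simp
  have halg : ((1 : ℂ) / ((a:ℝ)^2 : ℝ)) ^ (z + 1/2) = (a:ℂ) ^ (-(2*z)) / a := by
    have hca : ((a:ℝ):ℂ) = Complex.exp ((Real.log a : ℝ) : ℂ) := by
      rw [← Complex.ofReal_exp, Real.exp_log ha]
    have hinvpos : (0:ℝ) < 1 / a ^ 2 := by positivity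
    have hlog : Real.log (1 / a ^ 2) = -(2 * Real.log a) := by
      rw [one_div, Real.log_inv, Real.log_pow]
      push_cast; ring
    rw [show ((1:ℂ) / ((a:ℝ)^2 : ℝ)) = ((1 / a ^ 2 : ℝ) : ℂ) by push_cast; ring]
    rw [cpow_of_pos hinvpos, cpow_of_pos ha, hca, hlog, ← Complex.exp_sub]
    congr 1
    push_cast
    ring
  refine ⟨huv'_int, ?_⟩
  show (∫ t in Ioi (0:ℝ), u t * v' t) = _
  rw [key, hI2, hgam, halg]
  have hπ : ((Real.sqrt π : ℝ) : ℂ) ≠ 0 := Complex.ofReal_ne_zero.2 sqrt_pi_pos.ne'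
  have haC : ((a:ℝ):ℂ) ≠ 0 := Complex.ofReal_ne_zero.2 ha.ne'
  field_simp
  ring

lemma mellin_erfc_real {a : ℝ} (ha : 0 < a) {σ : ℝ} (hσ : 0 < σ) :
    IntegrableOn (fun t : ℝ => erfc (a * Real.sqrt t) * t ^ (σ - 1)) (Ioi 0) volume ∧
    ∫ t in Ioi (0:ℝ), erfc (a * Real.sqrt t) * t ^ (σ - 1)
      = Real.Gamma (σ + 1/2) / (σ * Real.sqrt π) * a ^ (-(2 * σ)) := by
  have hzre : (0:ℝ) < ((σ : ℂ)).re := by simpa using hσ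
  obtain ⟨hint, hval⟩ := mellin_erfc ha (z := (σ : ℂ)) hzre
  have hpt : ∀ t ∈ Ioi (0:ℝ),
      ((erfc (a * Real.sqrt t) : ℝ) : ℂ) * (t : ℂ) ^ ((σ:ℂ) - 1)
        = ((erfc (a * Real.sqrt t) * t ^ (σ - 1) : ℝ) : ℂ) := by
    intro t ht
    replace ht : 0 < t := ht
    rw [Complex.ofReal_mul, Complex.ofReal_cpow ht.le]
    push_cast
    ring
  constructor
  · refine hint.norm.congr ?_
    filter_upwards [ae_restrict_mem measurableSet_Ioi] with t ht
    replace ht : 0 < t := ht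
    rw [norm_mul, Complex.norm_real, Real.norm_eq_abs,
      Complex.norm_cpow_eq_rpow_re_of_pos ht, abs_of_nonneg (erfc_nonneg _)]
    congr 2
  · have h2 : ∫ t in Ioi (0:ℝ), ((erfc (a * Real.sqrt t) * t ^ (σ - 1) : ℝ) : ℂ)
        = Complex.Gamma ((σ:ℂ) + 1/2) / ((σ:ℂ) * Real.sqrt π) * ((a:ℝ) : ℂ) ^ (-(2 * (σ:ℂ))) := by
      rw [← hval]
      exact (setIntegral_congr_fun measurableSet_Ioi hpt).symm
    have h3 : (∫ t in Ioi (0:ℝ), ((erfc (a * Real.sqrt t) * t ^ (σ - 1) : ℝ) : ℂ))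
        = ((∫ t in Ioi (0:ℝ), erfc (a * Real.sqrt t) * t ^ (σ - 1) : ℝ) : ℂ) := integral_ofReal
    rw [h3] at h2
    apply Complex.ofReal_inj.1
    rw [h2, show ((σ:ℂ) + 1/2) = ((σ + 1/2 : ℝ) : ℂ) by push_cast; ring, Complex.Gamma_ofReal,
      show (-(2 * (σ:ℂ))) = ((-(2*σ) : ℝ) : ℂ) by push_cast; ring, ← Complex.ofReal_cpow ha.le]
    push_cast
    ring

lemma weyl_summable {lam : ℕ → ℝ} {m : ℕ} (hlam : ∀ n, lam n ≠ 0)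
    (hW : WeylBound lam m) {s : ℝ} (hs : (m : ℝ) < s) :
    Summable fun n => |lam n| ^ (-s) := by
  have hs0 : 0 < s := lt_of_le_of_lt (Nat.cast_nonneg m) hs
  obtain ⟨C, hC, hWb⟩ := hW
  obtain ⟨δ, hδ0, hδ1, hδ⟩ : ∃ δ : ℝ, 0 < δ ∧ δ ≤ 1 ∧ ∀ n, δ ≤ |lam n| := by
    have hfin := (hWb 1 zero_le_one).1
    rcases hfin.toFinset.eq_empty_or_nonempty with he | hne
    · refine ⟨1, one_pos, le_rfl, fun n => ?_⟩
      by_contra h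
      push_neg at h
      have : n ∈ hfin.toFinset := by
        rw [Set.Finite.mem_toFinset]
        exact h.le
      simp [he] at this
    · set F := hfin.toFinset with hF
      have hne' : (F.image fun n => |lam n|).Nonempty := hne.image _
      set v := (F.image fun n => |lam n|).min' hne' with hv
      have hvmem : v ∈ F.image fun n => |lam n| := Finset.min'_mem _ _
      obtain ⟨n₀, _, hn₀⟩ := Finset.mem_image.1 hvmem
      have hv0 : 0 < v := hn₀ ▸ abs_pos.2 (hlam n₀)
      refine ⟨min 1 v, lt_min one_pos hv0, min_le_left _ _, fun n => ?_⟩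
      rcases le_or_gt (|lam n|) 1 with h | h
      · have hnF : n ∈ F := by
          rw [hF, Set.Finite.mem_toFinset]
          exact h
        exact (min_le_right _ _).trans
          (Finset.min'_le _ _ (Finset.mem_image_of_mem _ hnF))
      · exact (min_le_left _ _).trans h.le
  set r : ℝ := (2 : ℝ) ^ ((m : ℝ) - s) with hr
  have hr0 : 0 < r := Real.rpow_pos_of_pos two_pos _
  have hr1 : r < 1 := by
    rw [hr, show (1:ℝ) = (2:ℝ) ^ (0:ℝ) by simp]
    exact Real.rpow_lt_rpow_left_iff one_lt_two |>.2 (by linarith)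
  have hgeo : Summable fun j : ℕ => r ^ j := summable_geometric_of_lt_one hr0.le hr1
  set D : ℝ := C * 3 ^ m * δ ^ (-s) with hD
  have hD0 : 0 ≤ D := by
    apply mul_nonneg (mul_nonneg hC.le (by positivity))
    exact Real.rpow_nonneg hδ0.le _
  set k : ℕ → ℕ := fun n => ⌊Real.logb 2 (|lam n| / δ)⌋₊ with hk
  have hshell : ∀ n, δ * 2 ^ k n ≤ |lam n| ∧ |lam n| ≤ δ * 2 ^ (k n + 1) := by
    intro n
    have hx0 : 0 < |lam n| / δ := div_pos (abs_pos.2 (hlam n)) hδ0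
    have hx1 : (1:ℝ) ≤ |lam n| / δ := (one_le_div hδ0).2 (hδ n)
    have hlb0 : 0 ≤ Real.logb 2 (|lam n| / δ) := Real.logb_nonneg one_lt_two hx1
    have hfl : ((k n : ℝ)) ≤ Real.logb 2 (|lam n| / δ) := Nat.floor_le hlb0
    have hfu : Real.logb 2 (|lam n| / δ) < (k n : ℝ) + 1 := Nat.lt_floor_add_one _
    have heq : (2:ℝ) ^ Real.logb 2 (|lam n| / δ) = |lam n| / δ :=
      Real.rpow_logb two_pos (by norm_num) hx0
    constructor
    · have h1 : (2:ℝ) ^ (k n : ℝ) ≤ |lam n| / δ := by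
        rw [← heq]
        exact Real.rpow_le_rpow_of_exponent_le one_le_two hfl
      rw [Real.rpow_natCast] at h1
      calc δ * 2 ^ k n ≤ δ * (|lam n| / δ) := by
            exact mul_le_mul_of_nonneg_left h1 hδ0.le
        _ = |lam n| := by field_simp
    · have h1 : |lam n| / δ ≤ (2:ℝ) ^ ((k n : ℝ) + 1) := by
        rw [← heq]
        exact Real.rpow_le_rpow_of_exponent_le one_le_two hfu.le
      rw [show ((k n : ℝ) + 1) = ((k n + 1 : ℕ) : ℝ) by push_cast; ring,
        Real.rpow_natCast] at h1
      calc |lam n| = δ * (|lam n| / δ) := by field_simp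
        _ ≤ δ * 2 ^ (k n + 1) := mul_le_mul_of_nonneg_left h1 hδ0.le
  apply summable_of_sum_le (c := D * ∑' j : ℕ, r ^ j)
    (fun n => Real.rpow_nonneg (abs_nonneg _) _)
  intro u
  rw [← Finset.sum_fiberwise_of_maps_to
    (fun n (hn : n ∈ u) => Finset.mem_image_of_mem k hn) (fun n => |lam n| ^ (-s))]
  have hfiber : ∀ j ∈ u.image k,
      (∑ n ∈ u.filter fun n => k n = j, |lam n| ^ (-s)) ≤ D * r ^ j := by
    intro j _
    have h2j : (0:ℝ) < 2 ^ j := by positivity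
    have hterm : ∀ n ∈ u.filter fun n => k n = j, |lam n| ^ (-s) ≤ (δ * 2 ^ j) ^ (-s) := by
      intro n hn
      obtain ⟨-, hkn⟩ := Finset.mem_filter.1 hn
      have h1 := (hshell n).1
      rw [hkn] at h1
      exact Real.rpow_le_rpow_of_nonpos (by positivity) h1 (neg_nonpos.2 hs0.le)
    have hcard : (((u.filter fun n => k n = j)).card : ℝ) ≤ C * (1 + δ * 2 ^ (j + 1)) ^ m := by
      have hWj := hWb (δ * 2 ^ (j + 1)) (by positivity)
      have hsub : (((u.filter fun n => k n = j)) : Set ℕ) ⊆ {n | |lam n| ≤ δ * 2 ^ (j + 1)} := by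
        intro n hn
        simp only [Finset.coe_filter, mem_setOf_eq] at hn ⊢
        obtain ⟨-, hkn⟩ := hn
        have h2 := (hshell n).2
        rw [hkn] at h2
        exact h2
      have h1 := Set.ncard_le_ncard hsub hWj.1
      rw [Set.ncard_coe_finset] at h1
      exact (Nat.cast_le.2 h1).trans hWj.2
    have e1 : (δ * 2 ^ j) ^ (-s) = δ ^ (-s) * ((2:ℝ) ^ j) ^ (-s) :=
      Real.mul_rpow hδ0.le (by positivity)
    have e2 : ((2:ℝ) ^ j) ^ m * ((2:ℝ) ^ j) ^ (-s) = r ^ j := by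
      rw [← Real.rpow_natCast ((2:ℝ) ^ j) m, ← Real.rpow_add h2j,
        ← Real.rpow_natCast (2:ℝ) j, ← Real.rpow_mul (by norm_num),
        hr, ← Real.rpow_natCast ((2:ℝ) ^ ((m:ℝ) - s)) j, ← Real.rpow_mul (by norm_num)]
      congr 1
      ring
    have e3 : (1 + δ * 2 ^ (j + 1)) ^ m ≤ 3 ^ m * ((2:ℝ) ^ j) ^ m := by
      rw [← mul_pow]
      apply pow_le_pow_left₀ (by positivity)
      have h1 : (1:ℝ) ≤ 2 ^ j := one_le_pow₀ one_le_two
      have h2 : (2:ℝ) ^ (j + 1) = 2 * 2 ^ j := by ring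
      nlinarith
    calc (∑ n ∈ u.filter fun n => k n = j, |lam n| ^ (-s))
        ≤ ∑ _n ∈ u.filter fun n => k n = j, (δ * 2 ^ j) ^ (-s) := Finset.sum_le_sum hterm
      _ = ((u.filter fun n => k n = j)).card * (δ * 2 ^ j) ^ (-s) := by
          rw [Finset.sum_const, nsmul_eq_mul]
      _ ≤ C * (1 + δ * 2 ^ (j + 1)) ^ m * (δ * 2 ^ j) ^ (-s) :=
          mul_le_mul_of_nonneg_right hcard (Real.rpow_nonneg (by positivity) _)
      _ ≤ C * (3 ^ m * ((2:ℝ) ^ j) ^ m) * (δ * 2 ^ j) ^ (-s) := by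
          apply mul_le_mul_of_nonneg_right _ (Real.rpow_nonneg (by positivity) _)
          exact mul_le_mul_of_nonneg_left e3 hC.le
      _ = D * r ^ j := by
          rw [e1, hD, ← e2]
          ring
  calc (∑ j ∈ u.image k, ∑ n ∈ u.filter fun n => k n = j, |lam n| ^ (-s))
      ≤ ∑ j ∈ u.image k, D * r ^ j := Finset.sum_le_sum hfiber
    _ = D * ∑ j ∈ u.image k, r ^ j := by rw [Finset.mul_sum]
    _ ≤ D * ∑' j : ℕ, r ^ j := by
        apply mul_le_mul_of_nonneg_left _ hD0
        exact Summable.sum_le_tsum _ (fun _ _ => pow_nonneg hr0.le _) hgeo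

/-- The series form of the APS identity for the cylinder contribution:
`∫₀^∞ (Σ (sgn λ_n/2)·erfc(|λ_n|√t))·t^{z−1} dt = (Γ(z+1/2)/(2z√π))·Σ sgn(λ_n)|λ_n|^{−2z}`
for `Re z > m/2`. -/
theorem stmt_10 (m : ℕ) (hm : 0 < m) (lam : ℕ → ℝ) (hlam : ∀ n, lam n ≠ 0)
    (hW : WeylBound lam m) (z : ℂ) (hz : (m : ℝ) / 2 < z.re) :
    IntegrableOn
      (fun t : ℝ => ((∑' n : ℕ, (Real.sign (lam n) / 2) * erfc (|lam n| * Real.sqrt t) : ℝ) : ℂ)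
        * (t : ℂ) ^ (z - 1)) (Ioi 0) volume ∧
    ∫ t in Ioi (0 : ℝ),
        ((∑' n : ℕ, (Real.sign (lam n) / 2) * erfc (|lam n| * Real.sqrt t) : ℝ) : ℂ)
          * (t : ℂ) ^ (z - 1)
      = (Complex.Gamma (z + 1/2) / (2 * z * Real.sqrt π))
          * ∑' n : ℕ, (Real.sign (lam n) : ℂ) * ((|lam n| : ℝ) : ℂ) ^ (-(2 * z)) := by
  have hσ : 0 < z.re := lt_of_le_of_lt (by positivity) hz
  have hzne : z ≠ 0 := by
    intro h; rw [h] at hσ; simp at hσ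
  have hm1 : (1 : ℝ) ≤ m := by exact_mod_cast hm
  have habs : ∀ n, 0 < |lam n| := fun n => abs_pos.2 (hlam n)
  have hsgn : ∀ n, |Real.sign (lam n)| = 1 := by
    intro n
    rcases (hlam n).lt_or_gt with h | h
    · rw [Real.sign_of_neg h]; norm_num
    · rw [Real.sign_of_pos h]; norm_num
  set g : ℕ → ℝ → ℝ := fun n t => Real.sign (lam n) / 2 * erfc (|lam n| * Real.sqrt t) with hg
  set w : ℝ → ℂ := fun t => (t : ℂ) ^ (z - 1) with hw
  set f : ℕ → ℝ → ℂ := fun n t => ((g n t : ℝ) : ℂ) * w t with hf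
  have hsum2σ : Summable fun n => |lam n| ^ (-(2 * z.re)) :=
    weyl_summable hlam hW (by linarith)
  have hsum2m : Summable fun n => |lam n| ^ (-(2 * (m : ℝ))) :=
    weyl_summable hlam hW (by linarith)
  -- pointwise bound on |g n t|
  have hgbound : ∀ t : ℝ, 0 < t → ∀ n, |g n t| ≤
      3 * m.factorial * (2 / t) ^ m / 2 * |lam n| ^ (-(2 * (m : ℝ))) := by
    intro t ht n
    set a := |lam n| with ha_def
    have ha : 0 < a := habs n
    have hx : 0 < a ^ 2 * t / 2 := by positivity
    have hfa : (0:ℝ) < m.factorial := by exact_mod_cast Nat.factorial_pos m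
    have hpm : 0 < (a ^ 2 * t / 2) ^ m := pow_pos hx m
    have h1 : (a ^ 2 * t / 2) ^ m ≤ m.factorial * Real.exp (a ^ 2 * t / 2) := by
      have h0 := Real.pow_div_factorial_le_exp _ hx.le m
      have := (div_le_iff₀ hfa).1 h0
      linarith
    have h2 : Real.exp (-(a ^ 2 * t / 2)) ≤ m.factorial / (a ^ 2 * t / 2) ^ m := by
      rw [Real.exp_neg, inv_eq_one_div, div_le_div_iff₀ (Real.exp_pos _) hpm]
      nlinarith
    have h3 : (m.factorial : ℝ) / (a ^ 2 * t / 2) ^ m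
        = m.factorial * (2 / t) ^ m * a ^ (-(2 * (m : ℝ))) := by
      have hL : ((lam n : ℝ) ^ 2) ^ m ≠ 0 := pow_ne_zero m (pow_ne_zero 2 (hlam n))
      have hT : (t : ℝ) ^ m ≠ 0 := pow_ne_zero m ht.ne'
      rw [Real.rpow_neg (abs_nonneg _),
        show (2 * (m : ℝ)) = ((2 * m : ℕ) : ℝ) by push_cast; ring, Real.rpow_natCast,
        pow_mul, ha_def, sq_abs, div_pow, mul_pow, div_pow]
      field_simp
    have herfc : erfc (a * Real.sqrt t) ≤ 3 * Real.exp (-(a ^ 2 * t / 2)) := by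
      have := erfc_le_exp (mul_nonneg ha.le (Real.sqrt_nonneg t))
      rwa [mul_pow, Real.sq_sqrt ht.le, show a ^ 2 * t / 2 = a ^ 2 * t / 2 from rfl] at this
    have habs_g : |g n t| = erfc (a * Real.sqrt t) / 2 := by
      rw [hg]
      simp only []
      rw [abs_mul, abs_div, hsgn n, abs_of_nonneg (erfc_nonneg _)]
      norm_num
      ring
    rw [habs_g]
    calc erfc (a * Real.sqrt t) / 2 ≤ 3 * Real.exp (-(a ^ 2 * t / 2)) / 2 := by linarith
      _ ≤ 3 * (m.factorial / (a ^ 2 * t / 2) ^ m) / 2 := by linarith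
      _ = 3 * m.factorial * (2 / t) ^ m / 2 * a ^ (-(2 * (m : ℝ))) := by rw [h3]; ring
  have hptsum : ∀ t : ℝ, 0 < t → Summable fun n => g n t := by
    intro t ht
    apply Summable.of_abs
    exact Summable.of_nonneg_of_le (fun n => abs_nonneg _) (hgbound t ht)
      (hsum2m.mul_left _)
  -- pointwise identity
  have hpt : ∀ t ∈ Ioi (0:ℝ), ((∑' n, g n t : ℝ) : ℂ) * w t = ∑' n, f n t := by
    intro t _
    rw [Complex.ofReal_tsum, ← tsum_mul_right]
  -- measurability
  have hfmeas : ∀ n, AEStronglyMeasurable (f n) (volume.restrict (Ioi 0)) := by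
    intro n
    apply AEStronglyMeasurable.mul
    · exact (Complex.continuous_ofReal.comp (continuous_const.mul
        (continuous_erfc.comp (continuous_const.mul Real.continuous_sqrt)))).aestronglyMeasurable
    · refine ContinuousOn.aestronglyMeasurable ?_ measurableSet_Ioi
      intro t ht
      exact (Complex.continuousAt_ofReal_cpow_const t (z - 1)
        (Or.inr (ne_of_gt (mem_Ioi.1 ht)))).continuousWithinAt
  -- integrability of each f n
  have hfint : ∀ n, IntegrableOn (f n) (Ioi 0) volume := by
    intro n
    have h1 := ((mellin_erfc (habs n) hσ).1.const_mul ((Real.sign (lam n) / 2 : ℝ) : ℂ))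
    refine h1.congr (Eventually.of_forall fun t => ?_)
    show _ = f n t
    simp only [hf, hg, hw]
    push_cast
    ring
  -- value of the norm integrals
  have hnormval : ∀ n, ∫ t in Ioi (0:ℝ), ‖f n t‖
      = 1/2 * (Real.Gamma (z.re + 1/2) / (z.re * Real.sqrt π)) * |lam n| ^ (-(2 * z.re)) := by
    intro n
    have hR := mellin_erfc_real (habs n) hσ
    have hptn : ∀ t ∈ Ioi (0:ℝ),
        ‖f n t‖ = 1/2 * (erfc (|lam n| * Real.sqrt t) * t ^ (z.re - 1)) := by
      intro t ht
      replace ht : 0 < t := ht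
      rw [hf]
      simp only []
      rw [norm_mul, Complex.norm_real, Real.norm_eq_abs,
        Complex.norm_cpow_eq_rpow_re_of_pos ht, hg]
      simp only []
      rw [abs_mul, abs_div, hsgn n, abs_two, abs_of_nonneg (erfc_nonneg _),
        show (z - 1).re = z.re - 1 by simp]
      ring
    rw [setIntegral_congr_fun measurableSet_Ioi hptn, integral_const_mul, hR.2]
    ring
  have hIsum : Summable fun n => ∫ t in Ioi (0:ℝ), ‖f n t‖ := by
    refine Summable.congr
      (hsum2σ.mul_left (1/2 * (Real.Gamma (z.re + 1/2) / (z.re * Real.sqrt π)))) ?_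
    intro n
    exact (hnormval n).symm
  have hlin : (∑' n, ∫⁻ t in Ioi (0:ℝ), ‖f n t‖₊) ≠ ⊤ := by
    have heq : ∀ n, (∫⁻ t in Ioi (0:ℝ), ‖f n t‖₊) = ENNReal.ofReal (∫ t in Ioi (0:ℝ), ‖f n t‖) :=
      fun n => (ofReal_integral_norm_eq_lintegral_enorm (hfint n)).symm
    rw [tsum_congr heq, ← ENNReal.ofReal_tsum_of_nonneg
      (fun n => integral_nonneg fun t => norm_nonneg _) hIsum]
    exact ENNReal.ofReal_ne_top
  -- the target function
  set F : ℝ → ℂ := fun t => ((∑' n, g n t : ℝ) : ℂ) * w t with hF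
  have hFae : F =ᵐ[volume.restrict (Ioi 0)] fun t => ∑' n, f n t := by
    filter_upwards [ae_restrict_mem measurableSet_Ioi] with t ht
    exact hpt t ht
  have hnormsum : ∀ t : ℝ, 0 < t → Summable fun n => ‖f n t‖ := by
    intro t ht
    have h1 : ∀ n, ‖f n t‖ = |g n t| * ‖w t‖ := by
      intro n
      rw [hf]
      simp only []
      rw [norm_mul, Complex.norm_real, Real.norm_eq_abs]
    refine Summable.congr (((hptsum t ht).abs.mul_right ‖w t‖)) fun n => (h1 n).symm
  have hFmeas : AEStronglyMeasurable (fun t => ∑' n, f n t) (volume.restrict (Ioi 0)) := by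
    refine aestronglyMeasurable_of_tendsto_ae atTop
      (fun j => Finset.aestronglyMeasurable_sum (Finset.range j) fun n _ => hfmeas n) ?_
    filter_upwards [ae_restrict_mem measurableSet_Ioi] with t ht
    replace ht : 0 < t := ht
    have h1 := (hptsum t ht).hasSum.tendsto_sum_nat
    have h2 := ((Complex.continuous_ofReal.tendsto _).comp h1).mul_const (w t)
    have h3 : (fun j : ℕ => ∑ n ∈ Finset.range j, f n t)
        = fun j : ℕ => ((∑ n ∈ Finset.range j, g n t : ℝ) : ℂ) * w t := by
      funext j
      rw [Complex.ofReal_sum, Finset.sum_mul]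
    simp only [Finset.sum_apply]
    rw [h3, ← hpt t (mem_Ioi.2 ht)]
    exact h2
  have hFint : IntegrableOn F (Ioi 0) volume := by
    refine ⟨hFmeas.congr hFae.symm, ?_⟩
    have hbound : ∀ᵐ t ∂(volume.restrict (Ioi 0)),
        (‖F t‖₊ : ℝ≥0∞) ≤ ∑' n, (‖f n t‖₊ : ℝ≥0∞) := by
      filter_upwards [ae_restrict_mem measurableSet_Ioi] with t ht
      replace ht : 0 < t := ht
      rw [show F t = ∑' n, f n t from hpt t (mem_Ioi.2 ht)]
      have hs : Summable fun n => ‖f n t‖₊ := by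
        rw [← NNReal.summable_coe]
        simpa [coe_nnnorm] using hnormsum t ht
      calc (‖∑' n, f n t‖₊ : ℝ≥0∞) ≤ ((∑' n, ‖f n t‖₊ : ℝ≥0) : ℝ≥0∞) := by
            exact_mod_cast nnnorm_tsum_le hs
        _ = ∑' n, (‖f n t‖₊ : ℝ≥0∞) := ENNReal.coe_tsum hs
    have hle : (∫⁻ t in Ioi (0:ℝ), ‖F t‖₊) ≤ ∑' n, ∫⁻ t in Ioi (0:ℝ), ‖f n t‖₊ := by
      calc (∫⁻ t in Ioi (0:ℝ), ‖F t‖₊) ≤ ∫⁻ t in Ioi (0:ℝ), ∑' n, ‖f n t‖₊ :=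
            lintegral_mono_ae hbound
        _ = ∑' n, ∫⁻ t in Ioi (0:ℝ), ‖f n t‖₊ :=
            lintegral_tsum fun n => (hfmeas n).enorm
    exact lt_of_le_of_lt hle (lt_top_iff_ne_top.2 hlin)
  refine ⟨hFint, ?_⟩
  have hstep : (∫ t in Ioi (0:ℝ), F t) = ∑' n, ∫ t in Ioi (0:ℝ), f n t := by
    rw [integral_congr_ae hFae]
    exact integral_tsum hfmeas hlin
  show (∫ t in Ioi (0:ℝ), F t) = _
  rw [hstep]
  have hval : ∀ n, ∫ t in Ioi (0:ℝ), f n t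
      = Complex.Gamma (z + 1/2) / (2 * z * Real.sqrt π)
        * ((Real.sign (lam n) : ℂ) * ((|lam n| : ℝ) : ℂ) ^ (-(2 * z))) := by
    intro n
    have h1 : (∫ t in Ioi (0:ℝ), f n t) = ((Real.sign (lam n) / 2 : ℝ) : ℂ)
        * ∫ t in Ioi (0:ℝ), ((erfc (|lam n| * Real.sqrt t) : ℝ) : ℂ) * (t : ℂ) ^ (z - 1) := by
      rw [← integral_const_mul]
      refine setIntegral_congr_fun measurableSet_Ioi fun t ht => ?_
      simp only [hf, hg, hw]
      push_cast
      ring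
    rw [h1, (mellin_erfc (habs n) hσ).2]
    have hπ : ((Real.sqrt π : ℝ) : ℂ) ≠ 0 := Complex.ofReal_ne_zero.2 sqrt_pi_pos.ne'
    push_cast
    field_simp
  rw [tsum_congr hval, tsum_mul_left]
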